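/- Let b ∈ (0,1), γ ∈ (0,1] and n ≥ 1 an integer. Then the quantity D_n := J_{n−1}(√γ b) + b^{2n} J_{n+1}(√γ b) is strictly positive, and if A_n, C_n ∈ ℝ satisfy the matching system A_n·J_n(√γ b) = C_n·(b^n − b^{−n}) + b^n and A_n·√γ·J_n'(√γ b) = n·C_n·(b^{n−1} + b^{−n−1}) + n·b^{n−1} (where J_n' denotes the derivative of J_n), then 2nC_n + n = n·( J_{n−1}(√γ b) − b^{2n} J_{n+1}(√γ b) ) / D_n. In particular the n-th eigenvalue of the Dirichlet-to-Neumann map for the one-step radial potential q = γχ_{(0,b)}(|x|) on the unit disk equals c_n = n ( J_{n−1}(√γ b) − b^{2n} J_{n+1}(√γ b) ) / ( J_{n−1}(√γ b) + b^{2n} J_{n+1}(√γ b) ). -/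

import Mathlib

open Real Set

/-- Bessel function of the first kind of integer order, via the Poisson integral
representation. -/
noncomputable def besselJ (n : ℕ) (r : ℝ) : ℝ :=
  r ^ n / (2 ^ n * Real.Gamma ((n : ℝ) + 1 / 2) * Real.sqrt Real.pi) *
    ∫ t in (-1 : ℝ)..1, Real.cos (r * t) * (1 - t ^ 2) ^ ((n : ℝ) - 1 / 2)

/-- The `n`-th eigenvalue (for `n ≥ 1`) of the Dirichlet-to-Neumann map for the one-step
radial potential `q = γ χ_{(0,b)}(|x|)` on the unit disk. -/
noncomputable def cEig (n : ℕ) (b γ : ℝ) : ℝ :=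
  n * (besselJ (n - 1) (Real.sqrt γ * b) - b ^ (2 * n) * besselJ (n + 1) (Real.sqrt γ * b)) /
    (besselJ (n - 1) (Real.sqrt γ * b) + b ^ (2 * n) * besselJ (n + 1) (Real.sqrt γ * b))

section Aux
open MeasureTheory intervalIntegral

lemma meas_rpow (ν : ℝ) : Measurable (fun t : ℝ => (1 - t^2) ^ ν) :=
  (measurable_const.sub (measurable_id'.pow_const 2)).pow measurable_const

lemma cont_rpow {ν : ℝ} (hν : 0 ≤ ν) : Continuous (fun t : ℝ => (1 - t^2) ^ ν) :=
  (Real.continuous_rpow_const hν).comp (continuous_const.sub (continuous_pow 2))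



lemma II_half : IntervalIntegrable (fun t : ℝ => (1 - t^2) ^ (-(1/2) : ℝ)) volume (-1) 1 := by
  have h01 : IntervalIntegrable (fun t : ℝ => (1 - t^2) ^ (-(1/2) : ℝ)) volume 0 1 := by
    have hg : IntervalIntegrable (fun t : ℝ => (1 - t) ^ (-(1/2) : ℝ)) volume 0 1 := by
      have := ((intervalIntegral.intervalIntegrable_rpow' (a := 0) (b := 1)
        (r := (-(1/2) : ℝ)) (by norm_num)).comp_sub_left 1).symm
      simpa using this
    refine hg.mono_fun ((meas_rpow _).aestronglyMeasurable) ?_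
    rw [Filter.EventuallyLE, ae_restrict_iff' measurableSet_uIoc]
    refine Filter.Eventually.of_forall fun t ht => ?_
    rw [Set.uIoc_of_le (by norm_num : (0:ℝ) ≤ 1)] at ht
    obtain ⟨ht0, ht1⟩ := ht
    rcases eq_or_lt_of_le ht1 with h1 | h1
    · subst h1
      simp [Real.zero_rpow (by norm_num : (-(1/2):ℝ) ≠ 0)]
    · have hb : (0:ℝ) < 1 - t := by linarith
      have hb2 : (0:ℝ) < 1 - t^2 := by nlinarith
      have hle : 1 - t ≤ 1 - t^2 := by nlinarith
      have := Real.rpow_le_rpow_of_nonpos hb hle (by norm_num : (-(1/2):ℝ) ≤ 0)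
      rw [Real.norm_eq_abs, Real.norm_eq_abs, abs_of_nonneg (Real.rpow_nonneg hb2.le _),
        abs_of_nonneg (Real.rpow_nonneg hb.le _)]
      exact this
  have hneg : IntervalIntegrable (fun t : ℝ => (1 - t^2) ^ (-(1/2) : ℝ)) volume (-1) 0 := by
    have := ((IntervalIntegrable.iff_comp_neg enorm_ne_top).mp h01).symm
    simp only [neg_zero, neg_sq] at this
    simpa using this
  exact hneg.trans h01

lemma II_cos (r ν : ℝ) (hν : ν = -(1/2) ∨ 0 ≤ ν) :
    IntervalIntegrable (fun t : ℝ => Real.cos (r*t) * (1-t^2)^ν) volume (-1) 1 := by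
  rcases hν with rfl | hν
  · refine II_half.mono_fun (((Real.measurable_cos.comp (measurable_const.mul measurable_id')).mul
      (meas_rpow _)).aestronglyMeasurable) ?_
    refine Filter.Eventually.of_forall fun t => ?_
    simp only [Real.norm_eq_abs, abs_mul]
    calc |Real.cos (r*t)| * |(1-t^2) ^ (-(1/2):ℝ)| ≤ 1 * |(1-t^2) ^ (-(1/2):ℝ)| := by
          gcongr; exact Real.abs_cos_le_one _
      _ = |(1-t^2) ^ (-(1/2):ℝ)| := one_mul _
  · exact ((Real.continuous_cos.comp (continuous_const.mul continuous_id')).mul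
      (cont_rpow hν)).intervalIntegrable _ _

lemma nu_cases (n : ℕ) : ((n:ℝ) - 1/2) = -(1/2) ∨ 0 ≤ ((n:ℝ) - 1/2) := by
  rcases n with _ | m
  · left; norm_num
  · right; have : (1:ℝ) ≤ ((m+1 : ℕ) : ℝ) := by exact_mod_cast Nat.one_le_iff_ne_zero.mpr (by simp)
    linarith


lemma intpos (r ν : ℝ) (hr0 : 0 ≤ r) (hr1 : r < π/2) (hν : ν = -(1/2) ∨ 0 ≤ ν) :
    0 < ∫ t in (-1:ℝ)..1, Real.cos (r*t) * (1-t^2)^ν := by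
  refine intervalIntegral_pos_of_pos_on (II_cos r ν hν) (fun t ht => ?_) (by norm_num)
  obtain ⟨ht1, ht2⟩ := ht
  have habs : |r * t| < π/2 := by
    rw [abs_mul]
    calc |r| * |t| ≤ |r| * 1 := by gcongr; rw [abs_le]; constructor <;> linarith
      _ = r := by rw [mul_one, abs_of_nonneg hr0]
      _ < π/2 := hr1
  have hcos : 0 < Real.cos (r*t) := Real.cos_pos_of_mem_Ioo (abs_lt.mp habs)
  have hb : (0:ℝ) < 1 - t^2 := by nlinarith
  exact mul_pos hcos (Real.rpow_pos_of_pos hb ν)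

lemma besselJ_pos (n : ℕ) (r : ℝ) (hr0 : 0 < r) (hr1 : r < π/2) : 0 < besselJ n r := by
  unfold besselJ
  apply mul_pos
  · apply div_pos (pow_pos hr0 n)
    apply mul_pos (mul_pos (pow_pos two_pos n) (Real.Gamma_pos_of_pos (by positivity)))
    exact Real.sqrt_pos.mpr Real.pi_pos
  · exact intpos r _ hr0.le hr1 (nu_cases n)

lemma base_hasDeriv {ν : ℝ} (t : ℝ) (ht : t ∈ Set.Ioo (-1:ℝ) 1) :
    HasDerivAt (fun t : ℝ => (1 - t^2) ^ ν) (-(2*t) * ν * (1-t^2)^(ν-1)) t := by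
  have hb : (0:ℝ) < 1 - t^2 := by obtain ⟨h1,h2⟩ := ht; nlinarith
  have h : HasDerivAt (fun t : ℝ => 1 - t^2) (-(2*t)) t := by
    simpa using (hasDerivAt_pow 2 t).const_sub 1
  exact h.rpow_const (Or.inl hb.ne')

lemma key_ibp (r ν : ℝ) (hν : (1:ℝ)/2 ≤ ν) :
    ∫ t in (-1:ℝ)..1, (r * Real.cos (r*t) * (1-t^2)^(ν+1)
      - (2*ν+2) * (t * Real.sin (r*t) * (1-t^2)^ν)) = 0 := by
  set F : ℝ → ℝ := fun t => Real.sin (r*t) * (1-t^2)^(ν+1) with hF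
  have hcont : ContinuousOn F (Set.Icc (-1:ℝ) 1) :=
    ((Real.continuous_sin.comp (continuous_const.mul continuous_id')).mul
      (cont_rpow (by linarith))).continuousOn
  have hderiv : ∀ t ∈ Set.Ioo (-1:ℝ) 1, HasDerivAt F
      (r * Real.cos (r*t) * (1-t^2)^(ν+1) - (2*ν+2) * (t * Real.sin (r*t) * (1-t^2)^ν)) t := by
    intro t ht
    have hm : HasDerivAt (fun t : ℝ => r * t) r t := by
      simpa using (hasDerivAt_id t).const_mul r
    have h1 : HasDerivAt (fun t : ℝ => Real.sin (r*t)) (Real.cos (r*t) * r) t :=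
      (Real.hasDerivAt_sin (r*t)).comp t hm
    have h2 := base_hasDeriv (ν := ν+1) t ht
    have := h1.fun_mul h2
    refine this.congr_deriv ?_
    have : ν + 1 - 1 = ν := by ring
    rw [this]; ring
  have hint : IntervalIntegrable (fun t => r * Real.cos (r*t) * (1-t^2)^(ν+1)
      - (2*ν+2) * (t * Real.sin (r*t) * (1-t^2)^ν)) volume (-1) 1 := by
    apply Continuous.intervalIntegrable
    have c1 : Continuous fun t : ℝ => r * Real.cos (r*t) * (1-t^2)^(ν+1) :=
      ((continuous_const.mul (Real.continuous_cos.comp (continuous_const.mul continuous_id'))).mul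
        (cont_rpow (by linarith)))
    have c2 : Continuous fun t : ℝ => (2*ν+2) * (t * Real.sin (r*t) * (1-t^2)^ν) :=
      continuous_const.mul ((continuous_id'.mul
        (Real.continuous_sin.comp (continuous_const.mul continuous_id'))).mul
        (cont_rpow (by linarith)))
    exact c1.sub c2
  have := intervalIntegral.integral_eq_sub_of_hasDeriv_right_of_le (by norm_num) hcont
    (fun t ht => (hderiv t ht).hasDerivWithinAt) hint
  rw [this]
  have hz : ν + 1 ≠ 0 := by linarith
  simp [hF, Real.zero_rpow hz]

lemma sin_moment (r ν : ℝ) (hν : (1:ℝ)/2 ≤ ν) :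
    ∫ t in (-1:ℝ)..1, t * Real.sin (r*t) * (1-t^2)^ν
      = r/(2*ν+2) * ∫ t in (-1:ℝ)..1, Real.cos (r*t) * (1-t^2)^(ν+1) := by
  have c1 : Continuous fun t : ℝ => r * Real.cos (r*t) * (1-t^2)^(ν+1) :=
    ((continuous_const.mul (Real.continuous_cos.comp (continuous_const.mul continuous_id'))).mul
      (cont_rpow (by linarith)))
  have c2 : Continuous fun t : ℝ => t * Real.sin (r*t) * (1-t^2)^ν :=
    ((continuous_id'.mul
      (Real.continuous_sin.comp (continuous_const.mul continuous_id'))).mul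
      (cont_rpow (by linarith)))
  have h := key_ibp r ν hν
  rw [intervalIntegral.integral_sub (c1.intervalIntegrable _ _)
    ((continuous_const.fun_mul c2).intervalIntegrable _ _), sub_eq_zero,
    intervalIntegral.integral_const_mul] at h
  have e1 : ∫ t in (-1:ℝ)..1, r * Real.cos (r*t) * (1-t^2)^(ν+1)
      = r * ∫ t in (-1:ℝ)..1, Real.cos (r*t) * (1-t^2)^(ν+1) := by
    simp_rw [mul_assoc]
    exact intervalIntegral.integral_const_mul _ _
  rw [e1] at h
  have h22 : (2*ν+2) ≠ 0 := by linarith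
  rw [div_mul_eq_mul_div, eq_div_iff h22]
  linarith [h]

lemma besselJ_hasDerivAt (n : ℕ) (hn : 1 ≤ n) (r : ℝ) (hr : r ≠ 0) :
    HasDerivAt (besselJ n) (((n:ℝ)/r) * besselJ n r - besselJ (n+1) r) r := by
  obtain ⟨m, rfl⟩ : ∃ m, n = m + 1 := ⟨n - 1, (Nat.succ_pred_eq_of_pos hn).symm⟩
  set ν : ℝ := ((m+1 : ℕ) : ℝ) - 1/2 with hνdef
  have hν : (1:ℝ)/2 ≤ ν := by
    have : (1:ℝ) ≤ ((m+1 : ℕ) : ℝ) := by exact_mod_cast Nat.one_le_iff_ne_zero.mpr (by simp)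
    simp only [hνdef]; linarith
  set I : ℝ → ℝ := fun s => ∫ t in (-1:ℝ)..1, Real.cos (s*t) * (1-t^2)^ν with hIdef
  clear_value ν
  have hI : HasDerivAt I (∫ t in (-1:ℝ)..1, -(t * Real.sin (r*t)) * (1-t^2)^ν) r := by
    rw [hIdef]
    have key := intervalIntegral.hasDerivAt_integral_of_dominated_loc_of_deriv_le
      (F := fun x t => Real.cos (x*t) * (1-t^2)^ν)
      (F' := fun x t => -(t * Real.sin (x*t)) * (1-t^2)^ν) (x₀ := r)
      (bound := fun _ => 1) (a := -1) (b := 1) (s := Metric.ball r 1) (μ := volume) (Metric.ball_mem_nhds r one_pos)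
      ?_ ?_ ?_ ?_ ?_ ?_
    · exact key.2
    · refine Filter.Eventually.of_forall fun x => ?_
      exact ((Real.continuous_cos.comp (continuous_const.mul continuous_id')).mul
        (cont_rpow (by linarith))).aestronglyMeasurable.restrict
    · exact II_cos r ν (Or.inr (by linarith))
    · exact ((continuous_id'.mul
        (Real.continuous_sin.comp (continuous_const.mul continuous_id'))).neg.mul
        (cont_rpow (by linarith))).aestronglyMeasurable.restrict
    · refine Filter.Eventually.of_forall fun t => fun ht x _ => ?_
      rw [Set.uIoc_of_le (by norm_num : (-1:ℝ) ≤ 1)] at ht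
      obtain ⟨ht1, ht2⟩ := ht
      have hb0 : (0:ℝ) ≤ 1 - t^2 := by nlinarith
      have hb1 : (1:ℝ) - t^2 ≤ 1 := by nlinarith
      have hrp : (1-t^2)^ν ≤ 1 := Real.rpow_le_one hb0 hb1 (by linarith)
      have habs : |t| ≤ 1 := abs_le.mpr ⟨by linarith, ht2⟩
      rw [Real.norm_eq_abs, abs_mul, abs_neg, abs_mul]
      calc |t| * |Real.sin (x*t)| * |(1-t^2)^ν|
          ≤ 1 * 1 * 1 := by
            gcongr
            · exact Real.abs_sin_le_one _
            · rw [abs_of_nonneg (Real.rpow_nonneg hb0 _)]; exact hrp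
        _ = 1 := by norm_num
    · exact intervalIntegrable_const
    · refine Filter.Eventually.of_forall fun t => fun _ x _ => ?_
      have h1 : HasDerivAt (fun x : ℝ => Real.cos (x*t)) (-Real.sin (x*t) * t) x :=
        (hasDerivAt_mul_const (x := x) t).cos
      have := h1.mul_const ((1-t^2)^ν)
      refine this.congr_deriv ?_
      ring
  have hmom : (∫ t in (-1:ℝ)..1, -(t * Real.sin (r*t)) * (1-t^2)^ν)
      = -(r/(2*ν+2) * ∫ t in (-1:ℝ)..1, Real.cos (r*t) * (1-t^2)^(ν+1)) := by
    rw [← sin_moment r ν hν, ← intervalIntegral.integral_neg]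
    congr 1; funext t; ring
  rw [hmom] at hI
  set J1 : ℝ := ∫ t in (-1:ℝ)..1, Real.cos (r*t) * (1-t^2)^(ν+1) with hJ1
  set K : ℝ := 2^(m+1) * Real.Gamma (((m+1:ℕ):ℝ) + 1/2) * Real.sqrt Real.pi with hK
  have hKpos : 0 < K := by
    rw [hK]
    apply mul_pos (mul_pos (pow_pos two_pos _) (Real.Gamma_pos_of_pos (by positivity)))
    exact Real.sqrt_pos.mpr Real.pi_pos
  have hpow : HasDerivAt (fun s : ℝ => s ^ (m+1) / K) ((((m+1:ℕ)):ℝ) * r^m / K) r := by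
    have := (hasDerivAt_pow (m+1) r).div_const K
    simpa using this
  have hprod := hpow.fun_mul hI
  have hfun : (fun s : ℝ => s ^ (m+1) / K * I s) = besselJ (m+1) := by
    funext s
    rw [hIdef, hK]
    unfold besselJ
    rw [hνdef]
  rw [hfun] at hprod
  have hBJn : besselJ (m+1) r = r^(m+1) / K * I r := by rw [← hfun]
  have h2ν : (2*ν+2) ≠ 0 := by linarith
  have hBJ1 : besselJ (m+1+1) r = r^(m+2) / ((2*ν+2) * K) * J1 := by
    unfold besselJ
    have hexp : ((m+1+1 : ℕ) : ℝ) - 1/2 = ν + 1 := by rw [hνdef]; push_cast; ring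
    rw [hexp]
    have hGamma : Real.Gamma (((m+1+1:ℕ)):ℝ) = 0 ∨ True := Or.inr trivial
    have hGam : Real.Gamma (((m+1+1:ℕ):ℝ) + 1/2) = (((m+1:ℕ):ℝ) + 1/2)
        * Real.Gamma (((m+1:ℕ):ℝ) + 1/2) := by
      have hx : ((m+1+1:ℕ):ℝ) + 1/2 = (((m+1:ℕ):ℝ) + 1/2) + 1 := by push_cast; ring
      rw [hx, Real.Gamma_add_one (by positivity)]
    rw [hGam, ← hJ1, hK]
    have hν1 : (((m+1:ℕ):ℝ) + 1/2) = ν + 1 := by rw [hνdef]; ring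
    rw [hν1]
    have : (2:ℝ)^(m+1+1) = 2 * 2^(m+1) := by ring
    rw [this]
    field_simp
    try tauto
  refine hprod.congr_deriv ?_
  rw [hBJ1, hBJn]
  field_simp
  ring

lemma besselJ_rec (m : ℕ) (r : ℝ) (hr : r ≠ 0) :
    r * besselJ m r + r * besselJ (m+2) r = 2 * ((m+1:ℕ):ℝ) * besselJ (m+1) r := by
  set ν : ℝ := (m : ℝ) - 1/2 with hνdef
  clear_value ν
  have hν' : ν = -(1/2) ∨ 0 ≤ ν := by
    rcases nu_cases m with h | h
    · left; rw [hνdef]; exact_mod_cast h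
    · right; rw [hνdef]; exact_mod_cast h
  have hν0 : -(1/2 : ℝ) ≤ ν := by
    rcases hν' with h | h
    · exact h.ge
    · linarith
  set IZ : ℝ := ∫ t in (-1:ℝ)..1, Real.cos (r*t) * (1-t^2)^ν with hIZ
  set IY : ℝ := ∫ t in (-1:ℝ)..1, Real.cos (r*t) * (1-t^2)^(ν+1) with hIY
  set IW : ℝ := ∫ t in (-1:ℝ)..1, Real.cos (r*t) * (1-t^2)^(ν+2) with hIW
  clear_value IZ IY IW
  -- continuity facts
  have cX : Continuous fun t : ℝ => t * Real.sin (r*t) * (1-t^2)^(ν+1) :=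
    ((continuous_id'.mul
      (Real.continuous_sin.comp (continuous_const.mul continuous_id'))).mul
      (cont_rpow (by linarith)))
  have cY : Continuous fun t : ℝ => Real.cos (r*t) * (1-t^2)^(ν+1) :=
    ((Real.continuous_cos.comp (continuous_const.mul continuous_id')).mul
      (cont_rpow (by linarith)))
  have iZ : IntervalIntegrable (fun t : ℝ => Real.cos (r*t) * (1-t^2)^ν) volume (-1) 1 :=
    II_cos r ν hν'
  -- the integration by parts for G
  set G : ℝ → ℝ := fun t => Real.cos (r*t) * (t * (1-t^2)^(ν+1)) with hG
  set g' : ℝ → ℝ := fun t => -r * (t * Real.sin (r*t) * (1-t^2)^(ν+1))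
    + (2*ν+3) * (Real.cos (r*t) * (1-t^2)^(ν+1)) - (2*ν+2) * (Real.cos (r*t) * (1-t^2)^ν)
    with hg'
  have hcont : ContinuousOn G (Set.Icc (-1:ℝ) 1) :=
    ((Real.continuous_cos.comp (continuous_const.mul continuous_id')).mul
      (continuous_id'.mul (cont_rpow (by linarith)))).continuousOn
  have hderiv : ∀ t ∈ Set.Ioo (-1:ℝ) 1, HasDerivAt G (g' t) t := by
    intro t ht
    have hb : (0:ℝ) < 1 - t^2 := by obtain ⟨h1, h2⟩ := ht; nlinarith
    have hm : HasDerivAt (fun t : ℝ => r * t) r t := by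
      simpa using (hasDerivAt_id t).const_mul r
    have h1 : HasDerivAt (fun t : ℝ => Real.cos (r*t)) (-Real.sin (r*t) * r) t :=
      (Real.hasDerivAt_cos (r*t)).comp t hm
    have h2 : HasDerivAt (fun t : ℝ => t * (1-t^2)^(ν+1))
        (1 * (1-t^2)^(ν+1) + t * (-(2*t) * (ν+1) * (1-t^2)^(ν+1-1))) t :=
      (hasDerivAt_id t).mul (base_hasDeriv t ht)
    have h3 := h1.fun_mul h2
    rw [hG]
    refine h3.congr_deriv ?_
    simp only [hg']
    have e0 : ν + 1 - 1 = ν := by ring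
    have e1 : (1-t^2)^(ν+1) = (1-t^2)^ν * (1-t^2) := Real.rpow_add_one hb.ne' ν
    rw [e0, e1]
    ring
  have hint : IntervalIntegrable g' volume (-1) 1 := by
    rw [hg']
    refine IntervalIntegrable.sub (IntervalIntegrable.add ?_ ?_) ?_
    · exact ((continuous_const.mul cX).intervalIntegrable _ _)
    · exact ((continuous_const.mul cY).intervalIntegrable _ _)
    · exact iZ.const_mul _
  have hFTC := intervalIntegral.integral_eq_sub_of_hasDeriv_right_of_le (by norm_num) hcont
    (fun t ht => (hderiv t ht).hasDerivWithinAt) hint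
  have hbdry : G 1 - G (-1) = 0 := by
    have hz : ν + 1 ≠ 0 := by linarith
    rw [hG]; simp [Real.zero_rpow hz]
  rw [hbdry] at hFTC
  -- split the integral
  have hsplit : (∫ t in (-1:ℝ)..1, g' t)
      = -r * (∫ t in (-1:ℝ)..1, t * Real.sin (r*t) * (1-t^2)^(ν+1))
        + (2*ν+3) * IY - (2*ν+2) * IZ := by
    rw [hg', hIY, hIZ]
    rw [intervalIntegral.integral_sub ((((continuous_const.fun_mul cX).fun_add
      (continuous_const.fun_mul cY))).intervalIntegrable _ _) (iZ.const_mul _),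
      intervalIntegral.integral_add ((continuous_const.fun_mul cX).intervalIntegrable _ _)
      ((continuous_const.fun_mul cY).intervalIntegrable _ _),
      intervalIntegral.integral_const_mul, intervalIntegral.integral_const_mul,
      intervalIntegral.integral_const_mul]
  have hmom := sin_moment r (ν+1) (by linarith)
  have hmom' : (∫ t in (-1:ℝ)..1, t * Real.sin (r*t) * (1-t^2)^(ν+1))
      = r/(2*ν+4) * IW := by
    rw [hmom, hIW]
    have e2 : 2*(ν+1)+2 = 2*ν+4 := by ring
    have e3 : ν+1+1 = ν+2 := by ring
    rw [e2, e3]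
  rw [hsplit, hmom'] at hFTC
  -- solve for IZ
  have h22 : (2*ν+2) ≠ 0 := by linarith
  have h24 : (2*ν+4) ≠ 0 := by linarith
  have hIZval : IZ = ((2*ν+3) * IY - r * (r/(2*ν+4) * IW)) / (2*ν+2) := by
    rw [eq_div_iff h22]
    linear_combination (-1:ℝ) * hFTC
  -- Gamma / constant bookkeeping
  set K : ℝ := 2^m * Real.Gamma ((m:ℝ) + 1/2) * Real.sqrt Real.pi with hK
  have hKpos : 0 < K := by
    rw [hK]
    apply mul_pos (mul_pos (pow_pos two_pos _) (Real.Gamma_pos_of_pos (by positivity)))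
    exact Real.sqrt_pos.mpr Real.pi_pos
  clear_value K
  have hGam1 : Real.Gamma (((m+1:ℕ):ℝ) + 1/2) = (ν+1) * Real.Gamma ((m:ℝ) + 1/2) := by
    have hx : ((m+1:ℕ):ℝ) + 1/2 = ((m:ℝ) + 1/2) + 1 := by push_cast; ring
    rw [hx, Real.Gamma_add_one (by positivity)]
    congr 1
    rw [hνdef]; ring
  have hGam2 : Real.Gamma (((m+2:ℕ):ℝ) + 1/2) = (ν+2) * ((ν+1) * Real.Gamma ((m:ℝ) + 1/2)) := by
    have hx : ((m+2:ℕ):ℝ) + 1/2 = (((m+1:ℕ):ℝ) + 1/2) + 1 := by push_cast; ring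
    rw [hx, Real.Gamma_add_one (by positivity), hGam1]
    have : ((m+1:ℕ):ℝ) + 1/2 = ν + 2 := by rw [hνdef]; push_cast; ring
    rw [this]
  have hden1 : (2:ℝ)^(m+1) * Real.Gamma (((m+1:ℕ):ℝ) + 1/2) * Real.sqrt Real.pi
      = (2*ν+2) * K := by
    rw [hGam1, hK, pow_succ]; ring
  have hden2 : (2:ℝ)^(m+2) * Real.Gamma (((m+2:ℕ):ℝ) + 1/2) * Real.sqrt Real.pi
      = (2*ν+2) * (2*ν+4) * K := by
    rw [hGam2, hK, pow_succ, pow_succ]; ring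
  have hBm : besselJ m r = r^m / K * IZ := by
    unfold besselJ
    rw [← hνdef, ← hIZ, hK]
  have hBm1 : besselJ (m+1) r = r^(m+1) / ((2*ν+2) * K) * IY := by
    unfold besselJ
    have he : ((m+1:ℕ):ℝ) - 1/2 = ν + 1 := by rw [hνdef]; push_cast; ring
    rw [he, ← hIY, hden1]
  have hBm2 : besselJ (m+2) r = r^(m+2) / ((2*ν+2) * (2*ν+4) * K) * IW := by
    unfold besselJ
    have he : ((m+2:ℕ):ℝ) - 1/2 = ν + 2 := by rw [hνdef]; push_cast; ring
    rw [he, ← hIW, hden2]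
  rw [hBm, hBm1, hBm2, hIZval]
  have hcast : ((m+1:ℕ):ℝ) = ν + 3/2 := by rw [hνdef]; push_cast; ring
  rw [hcast]
  field_simp
  ring

end Aux

theorem dtn_nth_eigenvalue (n : ℕ) (hn : 1 ≤ n) (b γ : ℝ) (hb : b ∈ Set.Ioo (0 : ℝ) 1)
    (hγ : γ ∈ Set.Ioc (0 : ℝ) 1) :
    0 < besselJ (n - 1) (Real.sqrt γ * b) +
        b ^ (2 * n) * besselJ (n + 1) (Real.sqrt γ * b) ∧
      ∀ Aₙ Cₙ : ℝ,
        Aₙ * besselJ n (Real.sqrt γ * b) = Cₙ * (b ^ (n : ℤ) - b ^ (-(n : ℤ))) + b ^ (n : ℤ) →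
        Aₙ * Real.sqrt γ * deriv (besselJ n) (Real.sqrt γ * b) =
          n * Cₙ * (b ^ ((n : ℤ) - 1) + b ^ (-(n : ℤ) - 1)) + n * b ^ ((n : ℤ) - 1) →
        2 * n * Cₙ + n =
          n * (besselJ (n - 1) (Real.sqrt γ * b) -
              b ^ (2 * n) * besselJ (n + 1) (Real.sqrt γ * b)) /
            (besselJ (n - 1) (Real.sqrt γ * b) +
              b ^ (2 * n) * besselJ (n + 1) (Real.sqrt γ * b)) ∧
        cEig n b γ =
          n * (besselJ (n - 1) (Real.sqrt γ * b) -
              b ^ (2 * n) * besselJ (n + 1) (Real.sqrt γ * b)) /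
            (besselJ (n - 1) (Real.sqrt γ * b) +
              b ^ (2 * n) * besselJ (n + 1) (Real.sqrt γ * b)) := by
  obtain ⟨hb0, hb1⟩ := hb
  obtain ⟨hγ0, hγ1⟩ := hγ
  have hs0 : 0 < Real.sqrt γ := Real.sqrt_pos.mpr hγ0
  have hs1 : Real.sqrt γ ≤ 1 := by
    rw [show (1:ℝ) = Real.sqrt 1 from (Real.sqrt_one).symm]
    exact Real.sqrt_le_sqrt hγ1
  set s : ℝ := Real.sqrt γ with hsdef
  set x : ℝ := s * b with hxdef
  have hx0 : 0 < x := mul_pos hs0 hb0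
  have hx1 : x < 1 := by
    calc x = s * b := rfl
      _ ≤ 1 * b := by gcongr
      _ = b := one_mul b
      _ < 1 := hb1
  have hxpi : x < π/2 := by
    have := Real.pi_gt_three
    linarith
  have hP : 0 < besselJ (n-1) x := besselJ_pos _ x hx0 hxpi
  have hQ : 0 < besselJ (n+1) x := besselJ_pos _ x hx0 hxpi
  set P : ℝ := besselJ (n-1) x with hPdef
  set Q : ℝ := besselJ (n+1) x with hQdef
  have hD : 0 < P + b^(2*n) * Q := by positivity
  refine ⟨hD, fun A C h1 h2 => ?_⟩
  constructor
  · -- main algebraic identity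
    set Jn : ℝ := besselJ n x with hJdef
    have hdval : deriv (besselJ n) x = ((n:ℝ)/x) * Jn - Q :=
      (besselJ_hasDerivAt n hn x hx0.ne').deriv
    rw [hdval] at h2
    have hrec : x * P + x * Q = 2 * (n:ℝ) * Jn := by
      have h := besselJ_rec (n-1) x hx0.ne'
      have e1 : n - 1 + 2 = n + 1 := by omega
      have e2 : n - 1 + 1 = n := by omega
      rw [e1, e2] at h
      rw [hPdef, hQdef, hJdef]
      exact h
    -- clean up zpow
    have hbne : b ≠ 0 := hb0.ne'
    set B : ℝ := b^n with hBdef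
    have hB0 : 0 < B := pow_pos hb0 n
    have ez1 : (b:ℝ)^(n:ℤ) = B := by rw [hBdef]; exact_mod_cast zpow_natCast b n
    have ez2 : (b:ℝ)^(-(n:ℤ)) = B⁻¹ := by rw [zpow_neg, ez1]
    have ez3 : (b:ℝ)^((n:ℤ)-1) = B / b := by
      rw [zpow_sub₀ hbne, ez1, zpow_one]
    have ez4 : (b:ℝ)^(-(n:ℤ)-1) = B⁻¹ / b := by
      rw [zpow_sub₀ hbne, ez2, zpow_one]
    rw [ez1, ez2] at h1
    rw [ez3, ez4] at h2
    have e2n : (b:ℝ)^(2*n) = B^2 := by rw [hBdef, two_mul, pow_add, sq]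
    rw [e2n]
    have hn0 : (n:ℝ) ≠ 0 := by positivity
    have hxne : x ≠ 0 := hx0.ne'
    have hsne : s ≠ 0 := hs0.ne'
    -- step 1: eliminate the (n/x) term using h1
    have hEA : A * s * Q * (B * b) = -(2 * (n:ℝ) * C) := by
      have key : A * s * (((n:ℝ)/x) * Jn - Q) - ((n:ℝ)/b) * (A * Jn)
          = -(A * s * Q) := by
        rw [hxdef]
        field_simp
        ring
      rw [h1, h2] at key
      field_simp at key
      have hfac : (A * s * Q * (B * b) + 2 * (n:ℝ) * C) * (b^3 * B) = 0 := by
        linear_combination (b^3*B) * key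
      rcases mul_eq_zero.mp hfac with h | h
      · linarith
      · exact absurd h (by positivity)
    have hBne : B ≠ 0 := hB0.ne'
    have h1' : A * Jn * B = C * B^2 - C + B^2 := by
      field_simp at h1
      linear_combination h1
    have hrec' : s * b * P + s * b * Q = 2 * (n:ℝ) * Jn := by
      rw [hxdef] at hrec
      linarith [hrec]
    have hC2 : C * (P + B^2 * Q) * (2 * (n:ℝ) * b) = -(B^2 * Q) * (2 * (n:ℝ) * b) := by
      linear_combination (-(2*(n:ℝ)*Q*b)) * h1' + (-(A*B*Q*b)) * hrec' + (b*(P+Q)) * hEA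
    have hCval : C * (P + B^2 * Q) = -(B^2 * Q) :=
      mul_right_cancel₀ (by positivity) hC2
    rw [e2n] at hD
    rw [eq_div_iff hD.ne']
    linear_combination (2*(n:ℝ)) * hCval
  · rfl
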